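/- Let T > 0 and N > 0. Then there exists u₀ ∈ L²(ℝ) such that the one-dimensional heat solution u(t,x) = (4πt)^{−1/2} ∫_ℝ e^{−(x−y)²/(4t)} u₀(y) dy satisfies u(T,x) = sin(Nπx) · (4π(T+1))^{−1/2} e^{−x²/(4(T+1))} for all x ∈ ℝ. In particular the function x ↦ sin(Nπx) e^{−x²/(4(T+1))} lies (up to the stated constant) in the range of the heat semigroup at time T acting on L²(ℝ), and it vanishes at every point of the lattice ℤ/N = {n/N : n ∈ ℤ} while having positive L² norm. -/

import Mathlib

open Real MeasureTheory

/-- The solution of the one-dimensional heat equation with initial datum `u₀`, given by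
convolution with the Gaussian heat kernel. -/
noncomputable def heatSolution1d (u₀ : ℝ → ℝ) (t x : ℝ) : ℝ :=
  (4 * Real.pi * t) ^ (-(1 : ℝ) / 2) * ∫ y, Real.exp (-(x - y) ^ 2 / (4 * t)) * u₀ y

lemma gaussian_sin_integral (T aa x : ℝ) (hT : 0 < T) :
    ∫ y : ℝ, Real.exp (-(x - y) ^ 2 / (4 * T)) * (Real.exp (-y ^ 2 / 4) * Real.sin (aa * y)) =
      Real.sqrt (4 * Real.pi * T / (T + 1)) *
        (Real.exp (-x ^ 2 / (4 * (T + 1)) - aa ^ 2 * T / (T + 1)) * Real.sin (aa * x / (T + 1))) := by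
  have hT1 : (0 : ℝ) < T + 1 := by linarith
  have hTne : (T : ℂ) ≠ 0 := by exact_mod_cast hT.ne'
  have hT1ne : ((T : ℂ) + 1) ≠ 0 := by exact_mod_cast hT1.ne'
  set b : ℂ := ((-(T + 1) / (4 * T) : ℝ) : ℂ) with hb
  set c : ℂ := ((x / (2 * T) : ℝ) : ℂ) + (aa : ℂ) * Complex.I with hc
  set d : ℂ := ((-x ^ 2 / (4 * T) : ℝ) : ℂ) with hd
  have hpos : (0 : ℝ) < (T + 1) / (4 * T) := by positivity
  have hbre : b.re < 0 := by
    simp only [hb, Complex.ofReal_re, neg_div]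
    exact neg_lt_zero.mpr hpos
  have hbne : b ≠ 0 := by
    intro h; rw [h] at hbre; simp at hbre
  have h4bne : (4 : ℂ) * b ≠ 0 := mul_ne_zero (by norm_num) hbne
  have hpt : ∀ y : ℝ, Real.exp (-(x - y) ^ 2 / (4 * T)) * (Real.exp (-y ^ 2 / 4) * Real.sin (aa * y))
      = (Complex.exp (b * (y : ℂ) ^ 2 + c * y + d)).im := by
    intro y
    have hz : b * (y : ℂ) ^ 2 + c * y + d
        = ((-(x - y) ^ 2 / (4 * T) + -y ^ 2 / 4 : ℝ) : ℂ) + ((aa * y : ℝ) : ℂ) * Complex.I := by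
      rw [hb, hc, hd]; push_cast; field_simp; ring
    rw [hz, Complex.exp_im]
    simp only [Complex.add_re, Complex.ofReal_re, Complex.mul_I_re, Complex.ofReal_im,
      Complex.add_im, Complex.mul_I_im, neg_zero, add_zero, zero_add]
    rw [Real.exp_add]; ring
  have hInt : Integrable (fun y : ℝ => Complex.exp (b * (y : ℂ) ^ 2 + c * y + d)) :=
    integrable_cexp_quadratic' hbre c d
  calc ∫ y : ℝ, Real.exp (-(x - y) ^ 2 / (4 * T)) * (Real.exp (-y ^ 2 / 4) * Real.sin (aa * y))
      = ∫ y : ℝ, (Complex.exp (b * (y : ℂ) ^ 2 + c * y + d)).im := by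
        exact integral_congr_ae (Filter.Eventually.of_forall hpt)
    _ = (∫ y : ℝ, Complex.exp (b * (y : ℂ) ^ 2 + c * y + d)).im := integral_im hInt
    _ = _ := by
        rw [integral_cexp_quadratic hbre c d]
        have h1 : ((Real.pi : ℂ) / -b) ^ (1 / 2 : ℂ)
            = ((Real.sqrt (4 * Real.pi * T / (T + 1)) : ℝ) : ℂ) := by
          have hr : (Real.pi : ℂ) / -b = ((4 * Real.pi * T / (T + 1) : ℝ) : ℂ) := by
            rw [hb]; push_cast; field_simp
          rw [hr, Real.sqrt_eq_rpow, Complex.ofReal_cpow (by positivity)]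
          norm_num
        have hc2 : c ^ 2 = (((x / (2 * T)) ^ 2 - aa ^ 2 : ℝ) : ℂ)
            + ((2 * (x / (2 * T)) * aa : ℝ) : ℂ) * Complex.I := by
          rw [hc]; push_cast
          linear_combination (aa : ℂ) ^ 2 * Complex.I_sq
        have h4b : (4 : ℂ) * b = ((-(T + 1) / T : ℝ) : ℂ) := by
          rw [hb]; push_cast; field_simp
        have hinv : ((4 : ℂ) * b)⁻¹ = ((-(T / (T + 1)) : ℝ) : ℂ) := by
          rw [h4b, ← Complex.ofReal_inv]
          norm_cast
          rw [inv_div, div_neg]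
        have hre : -x ^ 2 / (4 * T) + ((x / (2 * T)) ^ 2 - aa ^ 2) * T / (T + 1)
            = -x ^ 2 / (4 * (T + 1)) - aa ^ 2 * T / (T + 1) := by
          field_simp
          ring
        have him : (2 * (x / (2 * T)) * aa) * T / (T + 1) = aa * x / (T + 1) := by
          field_simp
        have hw : d - c ^ 2 / (4 * b)
            = ((-x ^ 2 / (4 * (T + 1)) - aa ^ 2 * T / (T + 1) : ℝ) : ℂ)
              + ((aa * x / (T + 1) : ℝ) : ℂ) * Complex.I := by
          rw [div_eq_mul_inv, hc2, hinv, hd, ← hre, ← him]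
          push_cast
          ring
        rw [h1, hw]
        simp only [Complex.mul_im, Complex.ofReal_re, Complex.ofReal_im, Complex.exp_im,
          Complex.exp_re, Complex.add_re, Complex.mul_I_re, Complex.add_im, Complex.mul_I_im,
          Complex.I_re, Complex.I_im, neg_zero, add_zero, zero_add, zero_mul, mul_zero, mul_one]

lemma rpow_neg_half_eq (r : ℝ) (hr : 0 < r) :
    r ^ (-(1 : ℝ) / 2) = (Real.sqrt r)⁻¹ := by
  rw [neg_div, Real.rpow_neg hr.le, Real.sqrt_eq_rpow]

/-- For every `T > 0` and `N > 0` there exists `u₀ ∈ L²(ℝ)` whose heat solution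
at time `T` equals `sin (Nπx) * (4π(T+1))^{-1/2} * exp (-x²/(4(T+1)))`; in particular this
solution vanishes at every point of the lattice `ℤ/N` while having positive `L²` norm. -/
theorem heat_solution_sine_gaussian
    (T N : ℝ) (hT : 0 < T) (hN : 0 < N) :
    ∃ u₀ : ℝ → ℝ,
      MemLp u₀ 2 (volume : Measure ℝ) ∧
      (∀ x : ℝ,
        heatSolution1d u₀ T x =
          Real.sin (N * Real.pi * x) *
            ((4 * Real.pi * (T + 1)) ^ (-(1 : ℝ) / 2) * Real.exp (-x ^ 2 / (4 * (T + 1))))) ∧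
      (∀ n : ℤ, heatSolution1d u₀ T ((n : ℝ) / N) = 0) ∧
      0 < ∫ x, (heatSolution1d u₀ T x) ^ 2 := by
  have hT1 : (0 : ℝ) < T + 1 := by linarith
  have hπ : (0 : ℝ) < Real.pi := Real.pi_pos
  set a : ℝ := N * Real.pi * (T + 1) with ha
  set C : ℝ := Real.exp (a ^ 2 * T / (T + 1)) / Real.sqrt (4 * Real.pi) with hC
  have hCpos : 0 < C := by positivity
  set u₀ : ℝ → ℝ := fun y => C * (Real.exp (-y ^ 2 / 4) * Real.sin (a * y)) with hu
  have hform : ∀ x : ℝ, heatSolution1d u₀ T x =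
      Real.sin (N * Real.pi * x) *
        ((4 * Real.pi * (T + 1)) ^ (-(1 : ℝ) / 2) * Real.exp (-x ^ 2 / (4 * (T + 1)))) := by
    intro x
    have hkey := gaussian_sin_integral T a x hT
    have hax : a * x / (T + 1) = N * Real.pi * x := by
      rw [ha]; field_simp
    unfold heatSolution1d
    have hint : (∫ y, Real.exp (-(x - y) ^ 2 / (4 * T)) *
          (C * (Real.exp (-y ^ 2 / 4) * Real.sin (a * y))))
        = C * ∫ y, Real.exp (-(x - y) ^ 2 / (4 * T)) *
            (Real.exp (-y ^ 2 / 4) * Real.sin (a * y)) := by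
      rw [← MeasureTheory.integral_const_mul C]
      congr 1; funext y; ring
    rw [hu, hint, hkey, hax]
    rw [rpow_neg_half_eq _ (by positivity), rpow_neg_half_eq _ (by positivity)]
    have hCE : C * Real.exp (-x ^ 2 / (4 * (T + 1)) - a ^ 2 * T / (T + 1))
        = Real.exp (-x ^ 2 / (4 * (T + 1))) / Real.sqrt (4 * Real.pi) := by
      rw [hC, div_mul_eq_mul_div, ← Real.exp_add,
        show a ^ 2 * T / (T + 1) + (-x ^ 2 / (4 * (T + 1)) - a ^ 2 * T / (T + 1))
          = -x ^ 2 / (4 * (T + 1)) from by ring]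
    have h41 : Real.sqrt (4 * Real.pi * T / (T + 1))
        = Real.sqrt (4 * Real.pi) * Real.sqrt T / Real.sqrt (T + 1) := by
      rw [Real.sqrt_div (by positivity) (T + 1), Real.sqrt_mul (by positivity) T]
    have h4T : Real.sqrt (4 * Real.pi * T) = Real.sqrt (4 * Real.pi) * Real.sqrt T :=
      Real.sqrt_mul (by positivity) T
    have h4T1 : Real.sqrt (4 * Real.pi * (T + 1)) = Real.sqrt (4 * Real.pi) * Real.sqrt (T + 1) :=
      Real.sqrt_mul (by positivity) (T + 1)
    have hs0 : Real.sqrt (4 * Real.pi) ≠ 0 := by positivity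
    have hs1 : Real.sqrt T ≠ 0 := by positivity
    have hs2 : Real.sqrt (T + 1) ≠ 0 := by positivity
    rw [h41, h4T, h4T1]
    calc (Real.sqrt (4 * Real.pi) * Real.sqrt T)⁻¹ *
          (C * (Real.sqrt (4 * Real.pi) * Real.sqrt T / Real.sqrt (T + 1) *
            (Real.exp (-x ^ 2 / (4 * (T + 1)) - a ^ 2 * T / (T + 1)) *
              Real.sin (N * Real.pi * x))))
        = (Real.sqrt (4 * Real.pi) * Real.sqrt T)⁻¹ *
            (Real.sqrt (4 * Real.pi) * Real.sqrt T / Real.sqrt (T + 1)) *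
            (C * Real.exp (-x ^ 2 / (4 * (T + 1)) - a ^ 2 * T / (T + 1))) *
            Real.sin (N * Real.pi * x) := by ring
      _ = _ := by rw [hCE]; field_simp
  have hK : 0 < (4 * Real.pi * (T + 1)) ^ (-(1 : ℝ) / 2) :=
    Real.rpow_pos_of_pos (by positivity) _
  refine ⟨u₀, ?_, hform, ?_, ?_⟩
  · -- Memℒp
    have hcont : Continuous fun y : ℝ => C * (Real.exp (-y ^ 2 / 4) * Real.sin (a * y)) := by
      fun_prop
    rw [memLp_two_iff_integrable_sq hcont.aestronglyMeasurable]
    refine Integrable.mono' (((integrable_exp_neg_mul_sq (by norm_num : (0:ℝ) < 1/2)).const_mul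
      (C ^ 2))) ((hcont.pow 2).aestronglyMeasurable) (Filter.Eventually.of_forall fun y => ?_)
    have h1 : (C * (Real.exp (-y ^ 2 / 4) * Real.sin (a * y))) ^ 2
        ≤ C ^ 2 * Real.exp (-(1/2) * y ^ 2) := by
      have hs : Real.sin (a * y) ^ 2 ≤ 1 := Real.sin_sq_le_one _
      have he : Real.exp (-y ^ 2 / 4) ^ 2 = Real.exp (-(1/2) * y ^ 2) := by
        rw [sq, ← Real.exp_add]; congr 1; ring
      calc (C * (Real.exp (-y ^ 2 / 4) * Real.sin (a * y))) ^ 2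
          = C ^ 2 * Real.exp (-y ^ 2 / 4) ^ 2 * Real.sin (a * y) ^ 2 := by ring
        _ ≤ C ^ 2 * Real.exp (-y ^ 2 / 4) ^ 2 * 1 := by
            apply mul_le_mul_of_nonneg_left hs; positivity
        _ = C ^ 2 * Real.exp (-(1/2) * y ^ 2) := by rw [mul_one, he]
    rw [Real.norm_eq_abs, _root_.abs_of_nonneg (sq_nonneg _)]
    exact h1
  · -- zeros on the lattice
    intro n
    rw [hform]
    rw [show N * Real.pi * ((n : ℝ) / N) = (n : ℝ) * Real.pi from by field_simp,
      Real.sin_int_mul_pi, zero_mul]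
  · -- positive L² norm
    simp only [hform]
    set K : ℝ := (4 * Real.pi * (T + 1)) ^ (-(1 : ℝ) / 2) with hKdef
    have hcont2 : Continuous fun x : ℝ =>
        (Real.sin (N * Real.pi * x) * (K * Real.exp (-x ^ 2 / (4 * (T + 1))))) ^ 2 := by
      fun_prop
    have hintg : Integrable (fun x : ℝ =>
        (Real.sin (N * Real.pi * x) * (K * Real.exp (-x ^ 2 / (4 * (T + 1))))) ^ 2) := by
      refine Integrable.mono'
        ((integrable_exp_neg_mul_sq (show (0:ℝ) < 1 / (2 * (T + 1)) by positivity)).const_mul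
          (K ^ 2)) hcont2.aestronglyMeasurable (Filter.Eventually.of_forall fun x => ?_)
      rw [Real.norm_eq_abs, _root_.abs_of_nonneg (sq_nonneg _)]
      have hs : Real.sin (N * Real.pi * x) ^ 2 ≤ 1 := Real.sin_sq_le_one _
      have he : Real.exp (-x ^ 2 / (4 * (T + 1))) ^ 2
          = Real.exp (-(1 / (2 * (T + 1))) * x ^ 2) := by
        rw [sq, ← Real.exp_add]; congr 1; field_simp; ring
      calc (Real.sin (N * Real.pi * x) * (K * Real.exp (-x ^ 2 / (4 * (T + 1))))) ^ 2
          = K ^ 2 * Real.exp (-x ^ 2 / (4 * (T + 1))) ^ 2 * Real.sin (N * Real.pi * x) ^ 2 := by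
            ring
        _ ≤ K ^ 2 * Real.exp (-x ^ 2 / (4 * (T + 1))) ^ 2 * 1 := by
            apply mul_le_mul_of_nonneg_left hs; positivity
        _ = K ^ 2 * Real.exp (-(1 / (2 * (T + 1))) * x ^ 2) := by rw [mul_one, he]
    rw [integral_pos_iff_support_of_nonneg (fun x => sq_nonneg _) hintg]
    refine IsOpen.measure_pos _ hcont2.isOpen_support ⟨1 / (2 * N), ?_⟩
    simp only [Function.mem_support]
    rw [show N * Real.pi * (1 / (2 * N)) = Real.pi / 2 from by field_simp,
      Real.sin_pi_div_two, one_mul]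
    exact pow_ne_zero 2 (mul_ne_zero hK.ne' (Real.exp_pos _).ne')
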